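/- Let X, Y be topological spaces with Y compact, and f an admissible map. Then X +_f Y is compact if and only if f(A) ≠ ∅ for every closed non-compact subset A of X. -/
import Mathlib


open Set Topology

variable {X Y : Type*} [TopologicalSpace X] [TopologicalSpace Y]

/-- A map on subsets is *admissible* if it sends closed sets to closed sets,
the empty set to the empty set, and is finitely additive on closed sets. -/
def Admissible (f : Set X → Set Y) : Prop :=
  (∀ A : Set X, IsClosed A → IsClosed (f A)) ∧ f ∅ = ∅ ∧
    ∀ A B : Set X, IsClosed A → IsClosed B → f (A ∪ B) = f A ∪ f B

/-- The defining condition for a subset of `X ⊕ Y` to be closed in the sum space `X +_f Y`. -/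
def SumClosed (f : Set X → Set Y) (A : Set (X ⊕ Y)) : Prop :=
  IsClosed (Sum.inl ⁻¹' A) ∧ IsClosed (Sum.inr ⁻¹' A) ∧
    f (Sum.inl ⁻¹' A) ⊆ Sum.inr ⁻¹' A

theorem Admissible.mono {f : Set X → Set Y} (hf : Admissible f) {A B : Set X}
    (hA : IsClosed A) (hB : IsClosed B) (hAB : A ⊆ B) : f A ⊆ f B := by
  have h := hf.2.2 A B hA hB
  rw [union_eq_right.mpr hAB] at h
  rw [h]; exact subset_union_left

/-- The sum space `X +_f Y`. -/
def sumTopology (f : Set X → Set Y) (hf : Admissible f) : TopologicalSpace (X ⊕ Y) where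
  IsOpen s := SumClosed f sᶜ
  isOpen_univ := by
    refine ⟨?_, ?_, ?_⟩ <;> simp [hf.2.1]
  isOpen_inter := by
    rintro s t ⟨hs1, hs2, hs3⟩ ⟨ht1, ht2, ht3⟩
    refine ⟨?_, ?_, ?_⟩
    · simpa [compl_inter, preimage_union] using hs1.union ht1
    · simpa [compl_inter, preimage_union] using hs2.union ht2
    · rw [compl_inter, preimage_union, preimage_union, hf.2.2 _ _ hs1 ht1]
      exact union_subset_union hs3 ht3
  isOpen_sUnion := by
    intro S hS
    have hc : (⋃₀ S)ᶜ = ⋂ s ∈ S, sᶜ := by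
      rw [compl_sUnion, sInter_image]
    have h1 : IsClosed (Sum.inl ⁻¹' (⋃₀ S)ᶜ) := by
      rw [hc, preimage_iInter₂]
      exact isClosed_biInter fun s hs => (hS s hs).1
    have h2 : IsClosed (Sum.inr ⁻¹' (⋃₀ S)ᶜ) := by
      rw [hc, preimage_iInter₂]
      exact isClosed_biInter fun s hs => (hS s hs).2.1
    refine ⟨h1, h2, ?_⟩
    rw [hc, preimage_iInter₂, preimage_iInter₂]
    refine subset_iInter₂ fun s hs => ?_
    have h1' : IsClosed (⋂ i ∈ S, Sum.inl ⁻¹' iᶜ) := by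
      exact isClosed_biInter fun i hi => (hS i hi).1
    calc f (⋂ i ∈ S, Sum.inl ⁻¹' iᶜ) ⊆ f (Sum.inl ⁻¹' sᶜ) :=
          hf.mono h1' (hS s hs).1 (iInter₂_subset s hs)
      _ ⊆ Sum.inr ⁻¹' sᶜ := (hS s hs).2.2

theorem isClosed_sumTopology {f : Set X → Set Y} (hf : Admissible f) (A : Set (X ⊕ Y)) :
    IsClosed[sumTopology f hf] A ↔ SumClosed f A := by
  rw [← @isOpen_compl_iff _ _ (sumTopology f hf)]
  show SumClosed f Aᶜᶜ ↔ _
  rw [compl_compl]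


theorem continuous_inl_sum {f : Set X → Set Y} (hf : Admissible f) :
    Continuous[_, sumTopology f hf] Sum.inl := by
  refine continuous_def.mpr fun s hs => ?_
  rw [← isClosed_compl_iff, ← preimage_compl]
  exact hs.1

theorem continuous_inr_sum {f : Set X → Set Y} (hf : Admissible f) :
    Continuous[_, sumTopology f hf] Sum.inr := by
  refine continuous_def.mpr fun s hs => ?_
  rw [← isClosed_compl_iff, ← preimage_compl]
  exact hs.2.1

theorem isOpen_lift {f : Set X → Set Y} (hf : Admissible f) {V : Set X} (hV : IsOpen V) :
    IsOpen[sumTopology f hf] (Sum.inl '' Vᶜ ∪ Sum.inr '' f Vᶜ)ᶜ := by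
  show SumClosed f _
  rw [compl_compl]
  have h1 : Sum.inl ⁻¹' (Sum.inl '' Vᶜ ∪ Sum.inr '' f Vᶜ) = Vᶜ := by
    simp [preimage_union, Sum.inl_injective.preimage_image]
  have h2 : Sum.inr ⁻¹' (Sum.inl '' Vᶜ ∪ Sum.inr '' f Vᶜ) = f Vᶜ := by
    simp [preimage_union, Sum.inr_injective.preimage_image]
  refine ⟨?_, ?_, ?_⟩
  · rw [h1]; exact hV.isClosed_compl
  · rw [h2]; exact hf.1 _ hV.isClosed_compl
  · rw [h1, h2]

/-- compactness criterion for `X +_f Y` when `Y` is compact. -/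
theorem statement8 [CompactSpace Y] (f : Set X → Set Y) (hf : Admissible f) :
    @CompactSpace _ (sumTopology f hf) ↔
      ∀ A : Set X, IsClosed A → ¬IsCompact A → f A ≠ ∅ := by
  constructor
  · intro hc A hA hnA hfA
    apply hnA
    -- inl '' A is closed in the sum, hence compact
    have hclosed : IsClosed[sumTopology f hf] (Sum.inl '' A) := by
      rw [isClosed_sumTopology]
      refine ⟨?_, ?_, ?_⟩
      · rw [Sum.inl_injective.preimage_image]; exact hA
      · have : Sum.inr ⁻¹' (Sum.inl '' A) = (∅ : Set Y) := by simp
        rw [this]; exact isClosed_empty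
      · rw [Sum.inl_injective.preimage_image, hfA]
        exact empty_subset _
    have hcomp : @IsCompact _ (sumTopology f hf) (Sum.inl '' A) :=
      @IsClosed.isCompact _ (sumTopology f hf) _ hc hclosed
    -- transfer compactness back to A
    refine isCompact_of_finite_subcover fun {ι} U hU hcov => ?_
    have hcov' : Sum.inl '' A ⊆ ⋃ i, (Sum.inl '' (U i)ᶜ ∪ Sum.inr '' f (U i)ᶜ)ᶜ := by
      rintro z ⟨x, hx, rfl⟩
      obtain ⟨i, hi⟩ := mem_iUnion.mp (hcov hx)
      refine mem_iUnion.mpr ⟨i, ?_⟩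
      simp only [mem_compl_iff, mem_union, not_or]
      constructor
      · rintro ⟨x', hx', hxx⟩
        exact hx' (Sum.inl_injective hxx ▸ hi)
      · rintro ⟨y, _, hy⟩; exact Sum.inl_ne_inr hy.symm
    obtain ⟨t, ht⟩ := @IsCompact.elim_finite_subcover _ (sumTopology f hf) _ _ hcomp _ (fun i => isOpen_lift hf (hU i)) hcov'
    refine ⟨t, fun x hx => ?_⟩
    have := ht ⟨x, hx, rfl⟩
    obtain ⟨i, hit, hiz⟩ := mem_iUnion₂.mp this
    refine mem_iUnion₂.mpr ⟨i, hit, ?_⟩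
    by_contra hxU
    exact hiz (Or.inl ⟨x, hxU, rfl⟩)
  · intro h
    refine @CompactSpace.mk _ (sumTopology f hf) ?_
    refine @isCompact_of_finite_subcover _ (sumTopology f hf) _ fun {ι} U hU hcov => ?_
    -- cover the Y part
    have hYcomp : @IsCompact _ (sumTopology f hf) (range (Sum.inr : Y → X ⊕ Y)) :=
      @isCompact_range _ _ _ (sumTopology f hf) _ _ (continuous_inr_sum hf)
    obtain ⟨t₁, ht₁⟩ := @IsCompact.elim_finite_subcover _ (sumTopology f hf) _ _ hYcomp _ hU (subset_trans (subset_univ _) hcov)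
    set A : Set X := Sum.inl ⁻¹' (⋃ i ∈ t₁, U i)ᶜ with hAdef
    have hUopen : IsOpen[sumTopology f hf] (⋃ i ∈ t₁, U i) :=
      @isOpen_biUnion _ _ (sumTopology f hf) _ _ fun i _ => hU i
    have hCclosed : SumClosed f (⋃ i ∈ t₁, U i)ᶜ := hUopen
    have hAclosed : IsClosed A := hCclosed.1
    have hfA : f A = ∅ := by
      refine subset_empty_iff.mp ?_
      refine subset_trans hCclosed.2.2 ?_
      intro y hy
      exact hy (ht₁ ⟨y, rfl⟩)
    have hAcomp : IsCompact A := by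
      by_contra hnc
      exact h A hAclosed hnc hfA
    have hcovA : A ⊆ ⋃ i, Sum.inl ⁻¹' U i := by
      intro x _
      obtain ⟨i, hi⟩ := mem_iUnion.mp (hcov (mem_univ (Sum.inl x)))
      exact mem_iUnion.mpr ⟨i, hi⟩
    classical
    obtain ⟨t₂, ht₂⟩ := hAcomp.elim_finite_subcover _
      (fun i => @Continuous.isOpen_preimage _ _ _ (sumTopology f hf) _ (continuous_inl_sum hf) _ (hU i)) hcovA
    refine ⟨t₁ ∪ t₂, fun z _ => ?_⟩
    rcases z with x | y
    · by_cases hx : Sum.inl x ∈ ⋃ i ∈ t₁, U i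
      · obtain ⟨i, hit, hiz⟩ := mem_iUnion₂.mp hx
        exact mem_iUnion₂.mpr ⟨i, Finset.mem_union_left _ hit, hiz⟩
      · have hxA : x ∈ A := hx
        obtain ⟨i, hit, hiz⟩ := mem_iUnion₂.mp (ht₂ hxA)
        exact mem_iUnion₂.mpr ⟨i, Finset.mem_union_right _ hit, hiz⟩
    · obtain ⟨i, hit, hiz⟩ := mem_iUnion₂.mp (ht₁ ⟨y, rfl⟩)
      exact mem_iUnion₂.mpr ⟨i, Finset.mem_union_left _ hit, hiz⟩
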